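/- Let 𝔪_1,…,𝔪_t be monomials in x_1,…,x_m and n_i = 𝔪_i/gcd(𝔪_i,𝔪_t) for i = 1,…,t−1. The k-linear maps φ̃′_s from the s-th term of T′(𝔪_1,…,𝔪_{t−1}) to the s-th term of T′(n_1,…,n_{t−1}) defined on basis elements by φ̃′(x^α e^J) = (x^α·𝔪_J/𝔪_{J∪{t}})·ē^J for J ⊆ {1,…,t−1} (the image being zero unless 𝔪_{J∪{t}} divides x^α·𝔪_J) commute with the dual Taylor differentials, i.e. φ̃′ is a cochain map. -/

import Mathlib

/-!
STATEMENT 11: the maps φ̃′(x^α e^J) = (x^α·𝔪_J/𝔪_{J∪{t}})·ē^J (the image being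
zero unless 𝔪_{J∪{t}} divides x^α·𝔪_J) form a cochain map
T′(𝔪_1,…,𝔪_{t−1}) → T′(n_1,…,n_{t−1}).

Monomials in x_1,…,x_m are given by exponent vectors in `Fin m →₀ ℕ`:
𝔪_1,…,𝔪_{t−1} have exponent vectors `a i` (indexed by `i : Fin n`, n = t−1),
𝔪_t has exponent vector `b`; n_i = 𝔪_i/gcd(𝔪_i,𝔪_t) has exponent vector
`a i - a i ⊓ b`, and 𝔪_{J∪{t}} has exponent vector `J.sup a ⊔ b`.  Both dual
Taylor complexes have the same underlying free k-modules `DualX k m n s`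
(with basis x^α e^J, |J| = s), only the differentials differ.
-/

open Finset

/-- sign(j, J) for j ∉ J: (−1)^(number of elements of J smaller than j). -/
def taylorSign {t : ℕ} (J : Finset (Fin t)) (j : Fin t) : ℤ :=
  (-1) ^ (J.filter fun i => i < j).card

/-- Exponent vector of the monomial 𝔪_J = lcm_{j ∈ J} 𝔪_j (pointwise maximum). -/
noncomputable def lcmExp {m t : ℕ} (a : Fin t → (Fin m →₀ ℕ)) (J : Finset (Fin t)) :
    Fin m →₀ ℕ :=
  J.sup a

/-- The s-th term I^s of the dual Taylor complex: the free k-module with basis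
{x^α e^J : α ∈ ℕ^m, J ⊆ {1,…,t}, |J| = s}. -/
abbrev DualX (k : Type*) [CommRing k] (m t s : ℕ) : Type _ :=
  ((Fin m →₀ ℕ) × {J : Finset (Fin t) // J.card = s}) →₀ k

open scoped Classical in
/-- The dual Taylor differential
∂(x^α e^J) = Σ_{j∉J} sign(j,J)·(x^α·𝔪_J/𝔪_{J∪{j}})·e^{J∪{j}},
a summand being zero unless 𝔪_{J∪{j}} divides x^α·𝔪_J. -/
noncomputable def dualD {k : Type*} [CommRing k] {m t : ℕ}
    (a : Fin t → (Fin m →₀ ℕ)) (s : ℕ) :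
    DualX k m t s →ₗ[k] DualX k m t (s + 1) :=
  Finsupp.lsum ℕ fun p =>
    LinearMap.toSpanSingleton k (DualX k m t (s + 1))
      (∑ j ∈ p.2.1ᶜ.attach,
        taylorSign p.2.1 j.1 •
          (if lcmExp a (insert j.1 p.2.1) ≤ p.1 + lcmExp a p.2.1 then
            Finsupp.single
              (p.1 + lcmExp a p.2.1 - lcmExp a (insert j.1 p.2.1),
                ⟨insert j.1 p.2.1, by
                  rw [Finset.card_insert_of_notMem (Finset.mem_compl.mp j.2), p.2.2]⟩)
              (1 : k)
          else 0))

open scoped Classical in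
/-- The map φ̃′ in degree s, given on basis elements by
φ̃′(x^α e^J) = (x^α·𝔪_J/𝔪_{J∪{t}})·ē^J, the image being zero unless
𝔪_{J∪{t}} divides x^α·𝔪_J. -/
noncomputable def dualPhi {k : Type*} [CommRing k] {m n : ℕ}
    (a : Fin n → (Fin m →₀ ℕ)) (b : Fin m →₀ ℕ) (s : ℕ) :
    DualX k m n s →ₗ[k] DualX k m n s :=
  Finsupp.lsum ℕ fun p =>
    LinearMap.toSpanSingleton k (DualX k m n s)
      (if lcmExp a p.2.1 ⊔ b ≤ p.1 + lcmExp a p.2.1 then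
        Finsupp.single (p.1 + lcmExp a p.2.1 - (lcmExp a p.2.1 ⊔ b), p.2) (1 : k)
      else 0)


section Helpers

variable {m t : ℕ}

lemma sub_inf_eq (u v : Fin m →₀ ℕ) : u - u ⊓ v = (u ⊔ v) - v := by
  ext x
  simp [Finsupp.tsub_apply, Finsupp.inf_apply, Finsupp.sup_apply]
  omega

lemma sup_tsub_eq (u v w : Fin m →₀ ℕ) : (u ⊔ v) - w = (u - w) ⊔ (v - w) := by
  ext x
  simp [Finsupp.tsub_apply, Finsupp.sup_apply]
  omega

lemma map_ite_zero {k : Type*} [Semiring k] {M N : Type*} [AddCommMonoid M] [Module k M]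
    [AddCommMonoid N] [Module k N] (f : M →ₗ[k] N) (c : Prop) [Decidable c] (x : M) :
    f (if c then x else 0) = if c then f x else 0 := by
  split <;> simp

lemma lcmExp_mono (a : Fin t → (Fin m →₀ ℕ)) {J K : Finset (Fin t)} (h : J ⊆ K) :
    lcmExp a J ≤ lcmExp a K :=
  Finset.sup_mono h

lemma lcmExp_sub (a : Fin t → (Fin m →₀ ℕ)) (b : Fin m →₀ ℕ) (J : Finset (Fin t)) :
    lcmExp (fun i => a i - a i ⊓ b) J = (lcmExp a J ⊔ b) - b := by
  classical
  induction J using Finset.induction with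
  | empty => simp [lcmExp]; rfl
  | insert _ _ hnot ih =>
    rename_i i J
    simp only [lcmExp, Finset.sup_insert] at ih ⊢
    rw [ih, sub_inf_eq, ← sup_tsub_eq]
    congr 1
    ext x
    simp [Finsupp.sup_apply]

end Helpers

/-- φ̃′ commutes with the dual Taylor differentials of
T′(𝔪_1,…,𝔪_{t−1}) and T′(n_1,…,n_{t−1}), i.e. φ̃′ is a cochain map. -/
theorem dualPhi_cochain_map {k : Type*} [CommRing k] {m n : ℕ}
    (a : Fin n → (Fin m →₀ ℕ)) (b : Fin m →₀ ℕ) :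
    ∀ s : ℕ,
      (dualPhi (k := k) a b (s + 1)).comp (dualD (k := k) a s) =
        (dualD (k := k) (fun i => a i - a i ⊓ b) s).comp (dualPhi (k := k) a b s) := by
  intro s
  apply Finsupp.lhom_ext
  rintro ⟨α, J, hJ⟩ c
  classical
  simp only [LinearMap.comp_apply, dualD, dualPhi, Finsupp.lsum_single,
    LinearMap.toSpanSingleton_apply, map_smul, map_sum, map_zsmul, map_ite_zero, one_smul, smul_zero]
  congr 1
  by_cases hD1 : lcmExp a J ⊔ b ≤ α + lcmExp a J
  · rw [if_pos hD1]
    refine Finset.sum_congr rfl fun j _ => ?_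
    congr 1
    have hMMj : lcmExp a J ≤ lcmExp a (insert j.1 J) :=
      lcmExp_mono a (Finset.subset_insert _ _)
    have hbA : b ≤ α + lcmExp a J := le_trans le_sup_right hD1
    rw [lcmExp_sub a b (insert j.1 J), lcmExp_sub a b J,
      tsub_add_tsub_cancel hD1 le_sup_right]
    by_cases hC : lcmExp a (insert j.1 J) ⊔ b ≤ α + lcmExp a J
    · have hC1 : lcmExp a (insert j.1 J) ≤ α + lcmExp a J := le_trans le_sup_left hC
      rw [if_pos hC1, tsub_add_cancel_of_le hC1, if_pos hC,
        if_pos (tsub_le_tsub_right hC b),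
        tsub_tsub_tsub_cancel_right (le_sup_right : b ≤ lcmExp a (insert j.1 J) ⊔ b)]
    · rw [if_neg fun h => hC ((tsub_le_tsub_iff_right hbA).mp h)]
      by_cases hC1 : lcmExp a (insert j.1 J) ≤ α + lcmExp a J
      · rw [if_pos hC1, tsub_add_cancel_of_le hC1, if_neg hC]
      · rw [if_neg hC1]
  · rw [if_neg hD1]
    refine Finset.sum_eq_zero fun j _ => ?_
    have hMMj : lcmExp a J ≤ lcmExp a (insert j.1 J) :=
      lcmExp_mono a (Finset.subset_insert _ _)
    by_cases hC1 : lcmExp a (insert j.1 J) ≤ α + lcmExp a J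
    · rw [if_pos hC1, tsub_add_cancel_of_le hC1,
        if_neg fun h => hD1 (le_trans (sup_le_sup_right hMMj b) h), smul_zero]
    · rw [if_neg hC1, smul_zero]
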